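/- For the three-dimensional scalar-field system with γ = 2/3 (equations (scalar-field-A)): Σ' = C₂(Σ³ - A²Σ) + Σ(-A²λ² + 2w² - 2)/2 + (w - Aλ)(Aλ + w)/C₂ + 2C₂²Σ³/λ², A' = -A³λ²/2 + AC₂(Σ² - A²) + 2AC₂²Σ²/λ² + A(2Σ + w² + 1), w' = w(C₂(λ²(Σ² - A²) + 2C₂Σ² + 2Σ)/λ² - A²λ²/2 + Σ + w² + 1), with λ > 0 and C₂ > 0, the point (Σ,A,w) = (λ/√(C₂(2C₂+λ²)), 0, 0) is an equilibrium whose Jacobian has eigenvalues {2, 2λ/√(C₂(2C₂+λ²)) + 2, √(C₂(2C₂+λ²))/(C₂λ) + 2}; since all three are positive, it is a hyperbolic source for all λ > 0, C₂ > 0. -/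

import Mathlib

noncomputable section

/-- The three-dimensional scalar-field system (γ = 2/3 case) in `(Σ, A, w)`,
with parameters `C₂` and `lam` (= λ). -/
def Fsf (C₂ lam : ℝ) : ℝ × ℝ × ℝ → ℝ × ℝ × ℝ := fun p =>
  let S := p.1; let A := p.2.1; let w := p.2.2
  (C₂ * (S ^ 3 - A ^ 2 * S) + S * (-(A ^ 2 * lam ^ 2) + 2 * w ^ 2 - 2) / 2 +
     (w - A * lam) * (A * lam + w) / C₂ + 2 * C₂ ^ 2 * S ^ 3 / lam ^ 2,
   -(A ^ 3 * lam ^ 2) / 2 + A * C₂ * (S ^ 2 - A ^ 2) +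
     2 * A * C₂ ^ 2 * S ^ 2 / lam ^ 2 + A * (2 * S + w ^ 2 + 1),
   w * (C₂ * (lam ^ 2 * (S ^ 2 - A ^ 2) + 2 * C₂ * S ^ 2 + 2 * S) / lam ^ 2 -
     A ^ 2 * lam ^ 2 / 2 + S + w ^ 2 + 1))

/-- The point `(Σ, A, w) = (λ/√(C₂(2C₂+λ²)), 0, 0)` is an equilibrium of the
γ = 2/3 scalar-field system whose Jacobian has eigenvalues
`{2, 2λ/√(C₂(2C₂+λ²)) + 2, √(C₂(2C₂+λ²))/(C₂λ) + 2}`; all three are positive, so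
it is a hyperbolic source for all `λ > 0`, `C₂ > 0`. -/
theorem Q4_hyperbolic_source (C₂ lam : ℝ) (hC : 0 < C₂) (hlam : 0 < lam) :
    letI q : ℝ × ℝ × ℝ :=
      (lam / Real.sqrt (C₂ * (2 * C₂ + lam ^ 2)), 0, 0)
    Fsf C₂ lam q = 0 ∧
    Module.End.HasEigenvalue ((fderiv ℝ (Fsf C₂ lam) q).toLinearMap) 2 ∧
    Module.End.HasEigenvalue ((fderiv ℝ (Fsf C₂ lam) q).toLinearMap)
      (2 * lam / Real.sqrt (C₂ * (2 * C₂ + lam ^ 2)) + 2) ∧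
    Module.End.HasEigenvalue ((fderiv ℝ (Fsf C₂ lam) q).toLinearMap)
      (Real.sqrt (C₂ * (2 * C₂ + lam ^ 2)) / (C₂ * lam) + 2) ∧
    (0 : ℝ) < 2 ∧
    0 < 2 * lam / Real.sqrt (C₂ * (2 * C₂ + lam ^ 2)) + 2 ∧
    0 < Real.sqrt (C₂ * (2 * C₂ + lam ^ 2)) / (C₂ * lam) + 2 := by
  have hN : (0:ℝ) < C₂ * (2 * C₂ + lam ^ 2) := by positivity
  have hr0 : 0 < Real.sqrt (C₂ * (2 * C₂ + lam ^ 2)) := Real.sqrt_pos.mpr hN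
  set r : ℝ := Real.sqrt (C₂ * (2 * C₂ + lam ^ 2)) with hrdef
  have hr2 : r ^ 2 = C₂ * (2 * C₂ + lam ^ 2) := Real.sq_sqrt hN.le
  clear_value r
  set s : ℝ := lam / r with hsdef
  have hkey : C₂ * (2 * C₂ + lam ^ 2) * s ^ 2 = lam ^ 2 := by
    rw [hsdef, div_pow, ← hr2, mul_div_cancel₀]
    positivity
  clear_value s
  -- scalar identities
  have e1 : C₂ * s ^ 2 + 2 * C₂ ^ 2 * s ^ 2 / lam ^ 2 = 1 := by
    field_simp
    linear_combination hkey
  have e3 : lam / r = s := hsdef.symm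
  have e2 : 2 * C₂ * s / lam ^ 2 + s = r / (C₂ * lam) := by
    rw [hsdef]
    field_simp
    linear_combination (-1 : ℝ) * hr2
  set q : ℝ × ℝ × ℝ := (s, 0, 0) with hq
  have hdiff : DifferentiableAt ℝ (Fsf C₂ lam) q := by
    unfold Fsf; fun_prop
  have hline : ∀ v : ℝ × ℝ × ℝ, HasDerivAt (fun t : ℝ => q + t • v) v 0 := by
    intro v
    simpa using ((hasDerivAt_id (0:ℝ)).smul_const v).const_add q
  have key : ∀ (v : ℝ × ℝ × ℝ) (μ : ℝ),
      HasDerivAt (fun t : ℝ => Fsf C₂ lam (q + t • v)) (μ • v) 0 →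
      (fderiv ℝ (Fsf C₂ lam) q) v = μ • v := by
    intro v μ h
    have h0 : q + (0:ℝ) • v = q := by simp
    have h2 : HasDerivAt (fun t : ℝ => Fsf C₂ lam (q + t • v))
        ((fderiv ℝ (Fsf C₂ lam) q) v) 0 := by
      have := (h0 ▸ hdiff.hasFDerivAt).comp_hasDerivAt 0 (hline v)
      simp only [zero_smul, add_zero] at this
      exact this
    exact h2.unique h
  have hst : HasDerivAt (fun t : ℝ => s + t) 1 0 := by
    simpa using (hasDerivAt_id (0:ℝ)).const_add s
  have hcube : HasDerivAt (fun t : ℝ => (s + t) ^ 3) (3 * (s + 0) ^ 2 * 1) 0 := hst.pow 3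
  have hid : HasDerivAt (fun t : ℝ => t) 1 0 := hasDerivAt_id 0
  -- eigenvalue 2, eigenvector (1,0,0)
  have hv1 : (fderiv ℝ (Fsf C₂ lam) q) (1, 0, 0) = (2:ℝ) • ((1:ℝ), (0:ℝ), (0:ℝ)) := by
    apply key
    have hcurve : (fun t : ℝ => Fsf C₂ lam (q + t • ((1:ℝ), (0:ℝ), (0:ℝ)))) =
        fun t : ℝ => (C₂ * (s + t) ^ 3 + 2 * C₂ ^ 2 * (s + t) ^ 3 / lam ^ 2 - (s + t),
          (0:ℝ), (0:ℝ)) := by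
      funext t
      simp only [Fsf, hq, Prod.mk_add_mk, Prod.smul_mk, smul_eq_mul, mul_one, mul_zero,
        add_zero, Prod.mk.injEq]
      refine ⟨by ring, by ring, by ring⟩
    rw [hcurve]
    have hsm : ((2:ℝ) • ((1:ℝ), (0:ℝ), (0:ℝ)) : ℝ × ℝ × ℝ) = (2, 0, 0) := by simp
    rw [hsm]
    refine HasDerivAt.prodMk ?_ ((hasDerivAt_const _ _).prodMk (hasDerivAt_const _ _))
    have H := ((hcube.const_mul C₂).add ((hcube.const_mul (2 * C₂ ^ 2)).div_const
      (lam ^ 2))).sub hst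
    convert H using 1
    · rfl
    linear_combination (-3 : ℝ) * e1
  -- eigenvalue 2*lam/r + 2, eigenvector (0,1,0)
  have hv2 : (fderiv ℝ (Fsf C₂ lam) q) (0, 1, 0) =
      (2 * lam / r + 2) • ((0:ℝ), (1:ℝ), (0:ℝ)) := by
    apply key
    have hcurve : (fun t : ℝ => Fsf C₂ lam (q + t • ((0:ℝ), (1:ℝ), (0:ℝ)))) =
        fun t : ℝ => ((C₂ * s ^ 3 + 2 * C₂ ^ 2 * s ^ 3 / lam ^ 2 - s) +
          (-(C₂ * s) - s * lam ^ 2 / 2 - lam ^ 2 / C₂) * t ^ 2,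
          (C₂ * s ^ 2 + 2 * C₂ ^ 2 * s ^ 2 / lam ^ 2 + 2 * s + 1) * t +
            (-(lam ^ 2) / 2 - C₂) * t ^ 3, (0:ℝ)) := by
      funext t
      simp only [Fsf, hq, Prod.mk_add_mk, Prod.smul_mk, smul_eq_mul, mul_one, mul_zero,
        add_zero, zero_add, Prod.mk.injEq]
      refine ⟨by field_simp; ring, by ring, by ring⟩
    rw [hcurve]
    have hsm : ((2 * lam / r + 2) • ((0:ℝ), (1:ℝ), (0:ℝ)) : ℝ × ℝ × ℝ) =
        (0, 2 * lam / r + 2, 0) := by simp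
    rw [hsm]
    refine HasDerivAt.prodMk ?_ (HasDerivAt.prodMk ?_ (hasDerivAt_const _ _))
    · have H := (hasDerivAt_const (0:ℝ) (C₂ * s ^ 3 + 2 * C₂ ^ 2 * s ^ 3 / lam ^ 2 - s)).add
        ((hid.pow 2).const_mul (-(C₂ * s) - s * lam ^ 2 / 2 - lam ^ 2 / C₂))
      convert H using 1
      · rfl
      norm_num
    · have H := (hid.const_mul (C₂ * s ^ 2 + 2 * C₂ ^ 2 * s ^ 2 / lam ^ 2 + 2 * s + 1)).add
        ((hid.pow 3).const_mul (-(lam ^ 2) / 2 - C₂))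
      convert H using 1
      · rfl
      linear_combination 2 * e3 - e1
  -- eigenvalue r/(C₂ lam) + 2, eigenvector (0,0,1)
  have hv3 : (fderiv ℝ (Fsf C₂ lam) q) (0, 0, 1) =
      (r / (C₂ * lam) + 2) • ((0:ℝ), (0:ℝ), (1:ℝ)) := by
    apply key
    have hcurve : (fun t : ℝ => Fsf C₂ lam (q + t • ((0:ℝ), (0:ℝ), (1:ℝ)))) =
        fun t : ℝ => ((C₂ * s ^ 3 + 2 * C₂ ^ 2 * s ^ 3 / lam ^ 2 - s) +
          (s + 1 / C₂) * t ^ 2, (0:ℝ),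
          (C₂ * s ^ 2 + 2 * C₂ ^ 2 * s ^ 2 / lam ^ 2 + 2 * C₂ * s / lam ^ 2 + s + 1) * t +
            t ^ 3) := by
      funext t
      simp only [Fsf, hq, Prod.mk_add_mk, Prod.smul_mk, smul_eq_mul, mul_one, mul_zero,
        add_zero, zero_add, Prod.mk.injEq]
      refine ⟨by field_simp; ring, by ring, by field_simp; ring⟩
    rw [hcurve]
    have hsm : ((r / (C₂ * lam) + 2) • ((0:ℝ), (0:ℝ), (1:ℝ)) : ℝ × ℝ × ℝ) =
        (0, 0, r / (C₂ * lam) + 2) := by simp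
    rw [hsm]
    refine HasDerivAt.prodMk ?_ ((hasDerivAt_const _ _).prodMk ?_)
    · have H := (hasDerivAt_const (0:ℝ) (C₂ * s ^ 3 + 2 * C₂ ^ 2 * s ^ 3 / lam ^ 2 - s)).add
        ((hid.pow 2).const_mul (s + 1 / C₂))
      convert H using 1
      · rfl
      norm_num
    · have H := (hid.const_mul
        (C₂ * s ^ 2 + 2 * C₂ ^ 2 * s ^ 2 / lam ^ 2 + 2 * C₂ * s / lam ^ 2 + s + 1)).add
        (hid.pow 3)
      convert H using 1
      · rfl
      linear_combination (-1 : ℝ) * e1 - e2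
  have heig : ∀ (v : ℝ × ℝ × ℝ) (μ : ℝ), v ≠ 0 →
      (fderiv ℝ (Fsf C₂ lam) q) v = μ • v →
      Module.End.HasEigenvalue ((fderiv ℝ (Fsf C₂ lam) q).toLinearMap) μ := by
    intro v μ hv hfv
    exact Module.End.hasEigenvalue_of_hasEigenvector
      ⟨Module.End.mem_eigenspace_iff.mpr hfv, hv⟩
  refine ⟨?_, heig _ _ (by simp [Prod.ext_iff]) hv1, heig _ _ (by simp [Prod.ext_iff]) hv2,
    heig _ _ (by simp [Prod.ext_iff]) hv3, by norm_num,
    add_pos (div_pos (by positivity) hr0) two_pos,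
    add_pos (div_pos hr0 (by positivity)) two_pos⟩
  have hfirst : C₂ * (s ^ 3 - 0 ^ 2 * s) + s * (-(0 ^ 2 * lam ^ 2) + 2 * 0 ^ 2 - 2) / 2 +
      (0 - 0 * lam) * (0 * lam + 0) / C₂ + 2 * C₂ ^ 2 * s ^ 3 / lam ^ 2 = 0 := by
    linear_combination s * e1
  show Fsf C₂ lam (s, 0, 0) = 0
  simp only [Fsf]
  rw [Prod.ext_iff, Prod.ext_iff]
  refine ⟨hfirst, by norm_num, by norm_num⟩
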